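/- arXiv:2507.09729 — 4 statements merged into one kernel-verified Lean document; each statement's English description precedes it below -/
import Mathlib

section
/- Let X be a finite nonempty multiset of real numbers with even cardinality, let η ∈ ℝ be such that X is partitioned into L = {x ∈ X : x ≤ η} and R = {x ∈ X : x ≥ η} with |L| = |R| = |X|/2, and let μ̄ = (1/|X|) ∑_{x∈X} x. Then there exists a sub-multiset S ⊆ X such that (1) S ⊆ L or S ⊆ R, (2) for every s ∈ S, (s − η)² ≥ (1/9)(s − μ̄)², and (3) ∑_{s∈S} (s − μ̄)² ≥ (1/32) ∑_{x∈X} (x − μ̄)². -/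
private lemma sum_map_le_card_mul (M : Multiset ℝ) (g : ℝ → ℝ) (c : ℝ)
    (h : ∀ x ∈ M, g x ≤ c) : (M.map g).sum ≤ (Multiset.card M : ℝ) * c := by
  induction M using Multiset.induction_on with
  | empty => simp
  | cons a s ih =>
      simp only [Multiset.map_cons, Multiset.sum_cons, Multiset.card_cons]
      have h1 := ih (fun x hx => h x (Multiset.mem_cons_of_mem hx))
      have h2 := h a (Multiset.mem_cons_self a s)
      push_cast
      nlinarith [h1, h2]

private lemma card_mul_le_sum_map (M : Multiset ℝ) (g : ℝ → ℝ) (c : ℝ)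
    (h : ∀ x ∈ M, c ≤ g x) : (Multiset.card M : ℝ) * c ≤ (M.map g).sum := by
  induction M using Multiset.induction_on with
  | empty => simp
  | cons a s ih =>
      simp only [Multiset.map_cons, Multiset.sum_cons, Multiset.card_cons]
      have h1 := ih (fun x hx => h x (Multiset.mem_cons_of_mem hx))
      have h2 := h a (Multiset.mem_cons_self a s)
      push_cast
      nlinarith [h1, h2]

private lemma sum_map_const_sub (M : Multiset ℝ) (c : ℝ) :
    (M.map (fun x => c - x)).sum = (Multiset.card M : ℝ) * c - M.sum := by
  induction M using Multiset.induction_on with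
  | empty => simp
  | cons a s ih =>
      simp only [Multiset.map_cons, Multiset.sum_cons, Multiset.card_cons]
      push_cast
      rw [ih]; ring

private lemma mcauchy (M : Multiset ℝ) :
    M.sum ^ 2 ≤ (Multiset.card M : ℝ) * (M.map (fun x => x ^ 2)).sum := by
  induction M using Multiset.induction_on with
  | empty => simp
  | cons a s ih =>
      by_cases hs : s = 0
      · subst hs; simp
      · simp only [Multiset.map_cons, Multiset.sum_cons, Multiset.card_cons]
        have hn : (1:ℝ) ≤ (Multiset.card s : ℝ) := by
          have : 1 ≤ Multiset.card s := by
            exact Nat.one_le_iff_ne_zero.mpr (fun h => hs (Multiset.card_eq_zero.mp h))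
          exact_mod_cast this
        have hS : (0:ℝ) ≤ (s.map (fun x => x ^ 2)).sum := by
          have := card_mul_le_sum_map s (fun x => x ^ 2) 0 (fun x _ => sq_nonneg x)
          simpa using this
        push_cast
        nlinarith [ih, sq_nonneg ((Multiset.card s : ℝ) * a - s.sum), hn, hS,
          sq_nonneg (a - s.sum), sq_nonneg s.sum]

set_option maxHeartbeats 1000000 in
private lemma key (L R : Multiset ℝ) (η μ : ℝ)
    (hX : L + R ≠ 0)
    (hL : ∀ x ∈ L, x ≤ η) (hR : ∀ x ∈ R, η ≤ x)
    (hcard : Multiset.card L = Multiset.card R)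
    (hsum : (L + R).sum = (Multiset.card (L + R) : ℝ) * μ)
    (hμ : μ ≤ η) :
    ∃ S : Multiset ℝ,
      (S ≤ L ∨ S ≤ R) ∧
      (∀ s ∈ S, (s - η) ^ 2 ≥ (1 / 9) * (s - μ) ^ 2) ∧
      (S.map (fun s => (s - μ) ^ 2)).sum ≥
        (1 / 32) * (((L + R).map (fun x => (x - μ) ^ 2)).sum) := by
  classical
  obtain ⟨d, hd⟩ : ∃ d : ℝ, d = η - μ := ⟨η - μ, rfl⟩
  have hd0 : 0 ≤ d := by rw [hd]; linarith
  obtain ⟨n, hn⟩ : ∃ n : ℝ, n = (Multiset.card L : ℝ) := ⟨_, rfl⟩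
  have hcardR : (Multiset.card R : ℝ) = n := by rw [hn]; exact_mod_cast hcard.symm
  have hnpos : 0 < n := by
    rcases Nat.eq_zero_or_pos (Multiset.card L) with h | h
    · exfalso; apply hX
      have hr : Multiset.card R = 0 := hcard ▸ h
      rw [Multiset.card_eq_zero.mp h, Multiset.card_eq_zero.mp hr]; rfl
    · rw [hn]; exact_mod_cast h
  set f : ℝ → ℝ := fun x => (x - μ) ^ 2 with hf
  set gl := L.filter (fun x => 4 * x ≤ 3 * η + μ) with hgl0
  set bl := L.filter (fun x => ¬ 4 * x ≤ 3 * η + μ) with hbl0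
  set gr := R.filter (fun x => 3 * η - μ ≤ 2 * x) with hgr0
  set br := R.filter (fun x => ¬ 3 * η - μ ≤ 2 * x) with hbr0
  have hLsplit : gl + bl = L := Multiset.filter_add_not _ L
  have hRsplit : gr + br = R := Multiset.filter_add_not _ R
  -- good conditions
  have hgoodL : ∀ s ∈ gl, (s - η) ^ 2 ≥ (1 / 9) * (s - μ) ^ 2 := by
    intro s hs
    rw [hgl0, Multiset.mem_filter] at hs
    obtain ⟨hsL, hs4⟩ := hs
    have h1 : 0 ≤ 3 * η + μ - 4 * s := by linarith
    have h2 : 0 ≤ 3 * η - μ - 2 * s := by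
      have := hL s hsL; linarith
    nlinarith [mul_nonneg h1 h2]
  have hgoodR : ∀ s ∈ gr, (s - η) ^ 2 ≥ (1 / 9) * (s - μ) ^ 2 := by
    intro s hs
    rw [hgr0, Multiset.mem_filter] at hs
    obtain ⟨hsR, hs2⟩ := hs
    have h1 : 0 ≤ 2 * s - 3 * η + μ := by linarith
    have h2 : 0 ≤ 4 * s - 3 * η - μ := by
      have := hR s hsR; linarith
    nlinarith [mul_nonneg h1 h2]
  -- bad bound pointwise
  have hbadL : ∀ x ∈ bl, f x ≤ (9 / 4) * d ^ 2 := by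
    intro x hx
    rw [hbl0, Multiset.mem_filter] at hx
    obtain ⟨hxL, hx4⟩ := hx
    push_neg at hx4
    have hxη := hL x hxL
    have h1 : 0 ≤ (3 / 2) * d - (x - μ) := by rw [hd]; linarith
    have h2 : 0 ≤ (3 / 2) * d + (x - μ) := by rw [hd]; linarith
    have := mul_nonneg h1 h2
    rw [hf]; nlinarith [this]
  have hbadR : ∀ x ∈ br, f x ≤ (9 / 4) * d ^ 2 := by
    intro x hx
    rw [hbr0, Multiset.mem_filter] at hx
    obtain ⟨hxR, hx2⟩ := hx
    push_neg at hx2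
    have hxη := hR x hxR
    have h1 : 0 ≤ (3 / 2) * d - (x - μ) := by rw [hd]; linarith
    have h2 : 0 ≤ (3 / 2) * d + (x - μ) := by rw [hd]; linarith
    have := mul_nonneg h1 h2
    rw [hf]; nlinarith [this]
  -- sums
  set A := (gl.map f).sum with hA
  set B := (gr.map f).sum with hB
  set CL := (bl.map f).sum with hCL
  set CR := (br.map f).sum with hCR
  set V := ((L + R).map f).sum with hV
  have hVsplit : V = A + CL + B + CR := by
    rw [hV, ← hLsplit, ← hRsplit]
    simp only [Multiset.map_add, Multiset.sum_add]
    ring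
  -- cardinalities
  have hcGL : (Multiset.card gl : ℝ) ≤ n := by
    rw [hn]; exact_mod_cast Multiset.card_le_card (Multiset.filter_le _ L)
  have hcBL : (Multiset.card bl : ℝ) ≤ n := by
    rw [hn]; exact_mod_cast Multiset.card_le_card (Multiset.filter_le _ L)
  have hcBR : (Multiset.card br : ℝ) ≤ n := by
    rw [← hcardR]; exact_mod_cast Multiset.card_le_card (Multiset.filter_le _ R)
  -- bad sums bound
  have hCLle : CL ≤ n * ((9 / 4) * d ^ 2) := by
    have := sum_map_le_card_mul bl f ((9 / 4) * d ^ 2) hbadL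
    have h2 : (0:ℝ) ≤ (9 / 4) * d ^ 2 := by positivity
    calc CL ≤ (Multiset.card bl : ℝ) * ((9 / 4) * d ^ 2) := this
      _ ≤ n * ((9 / 4) * d ^ 2) := by
          exact mul_le_mul_of_nonneg_right hcBL h2
  have hCRle : CR ≤ n * ((9 / 4) * d ^ 2) := by
    have := sum_map_le_card_mul br f ((9 / 4) * d ^ 2) hbadR
    have h2 : (0:ℝ) ≤ (9 / 4) * d ^ 2 := by positivity
    calc CR ≤ (Multiset.card br : ℝ) * ((9 / 4) * d ^ 2) := this
      _ ≤ n * ((9 / 4) * d ^ 2) := by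
          exact mul_le_mul_of_nonneg_right hcBR h2
  -- nonnegativity of sums
  have hAnn : 0 ≤ A := by
    have := card_mul_le_sum_map gl f 0 (fun x _ => sq_nonneg _)
    simpa using this
  have hBnn : 0 ≤ B := by
    have := card_mul_le_sum_map gr f 0 (fun x _ => sq_nonneg _)
    simpa using this
  have hCLnn : 0 ≤ CL := by
    have := card_mul_le_sum_map bl f 0 (fun x _ => sq_nonneg _)
    simpa using this
  have hCRnn : 0 ≤ CR := by
    have := card_mul_le_sum_map br f 0 (fun x _ => sq_nonneg _)
    simpa using this
  have hVnn : 0 ≤ V := by rw [hVsplit]; linarith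
  -- lower bound on A
  set T := (gl.map (fun x => μ - x)).sum with hT
  have hTlb : n * d ≤ T := by
    -- sum over L of (μ - x) is ≥ n * d
    have hRsumlb : n * η ≤ R.sum := by
      have := card_mul_le_sum_map R (fun x => x) η hR
      rw [Multiset.map_id'] at this
      rw [← hcardR]; exact this
    have hLRsum : L.sum + R.sum = 2 * n * μ := by
      have h1 : (L + R).sum = L.sum + R.sum := Multiset.sum_add L R
      have h2 : (Multiset.card (L + R) : ℝ) = 2 * n := by
        rw [Multiset.card_add]; push_cast; rw [← hn, ← hcardR]; ring
      rw [h1, h2] at hsum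
      linarith [hsum]
    have hLg : (L.map (fun x => μ - x)).sum = n * μ - L.sum := by
      rw [sum_map_const_sub, hn]
    have hBLg : (bl.map (fun x => μ - x)).sum ≤ 0 := by
      have : ∀ x ∈ bl, μ - x ≤ 0 := by
        intro x hx
        rw [hbl0, Multiset.mem_filter] at hx
        obtain ⟨_, hx4⟩ := hx
        push_neg at hx4
        linarith
      have := sum_map_le_card_mul bl (fun x => μ - x) 0 this
      simpa using this
    have hsplitg : T + (bl.map (fun x => μ - x)).sum = n * μ - L.sum := by
      rw [← hLg, ← hLsplit]
      simp only [Multiset.map_add, Multiset.sum_add]; rfl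
    have : n * μ - L.sum ≥ n * d := by rw [hd]; nlinarith [hRsumlb, hLRsum]
    linarith
  have hAlb : n * d ^ 2 ≤ A := by
    have hCS := mcauchy (gl.map (fun x => μ - x))
    rw [Multiset.card_map, Multiset.map_map] at hCS
    have heq : (gl.map ((fun x => x ^ 2) ∘ fun x => μ - x)).sum = A := by
      rw [hA]
      congr 1
      apply Multiset.map_congr rfl
      intro x _
      simp only [Function.comp]
      ring
    rw [heq] at hCS
    -- T^2 ≤ card gl * A ≤ n * A, and T ≥ n*d ≥ 0
    have h2 : (Multiset.card gl : ℝ) * A ≤ n * A := mul_le_mul_of_nonneg_right hcGL hAnn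
    have h3 : T ^ 2 ≤ n * A := le_trans hCS h2
    have hTnn : 0 ≤ T := le_trans (by positivity) hTlb
    by_contra hcon
    push_neg at hcon
    have h4 : n * A < n * (n * d ^ 2) := mul_lt_mul_of_pos_left hcon hnpos
    have h5 : (n * d) ^ 2 ≤ T ^ 2 := pow_le_pow_left₀ (by positivity) hTlb 2
    nlinarith [h3, h4, h5]
  -- conclude
  by_cases hcase : (1 / 32) * V ≤ B
  · refine ⟨gr, Or.inr (Multiset.filter_le _ R), hgoodR, ?_⟩
    exact hcase
  · push_neg at hcase
    refine ⟨gl, Or.inl (Multiset.filter_le _ L), hgoodL, ?_⟩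
    -- CL + CR ≤ (9/2) * n * d^2 ≤ (9/2) * A
    have hbad : CL + CR ≤ (9 / 2) * A := by nlinarith [hCLle, hCRle, hAlb]
    nlinarith [hVsplit, hbad, hcase, hVnn]

private lemma sum_map_neg'' (M : Multiset ℝ) : (M.map (fun x => -x)).sum = - M.sum := by
  induction M using Multiset.induction_on with
  | empty => simp
  | cons a s ih =>
      simp only [Multiset.map_cons, Multiset.sum_cons, ih]; ring

/-- Bisection lemma: from a bisection (L, R) of a finite nonempty multiset X of reals
by a separator η, one can extract a sub-multiset S contained in one side such that
every element of S is (up to factor 1/9 in the square) as far from η as from the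
average μ̄, and S captures a 1/32 fraction of the total squared deviation. -/
theorem stmt0 (X L R : Multiset ℝ) (η : ℝ) (hX : X ≠ 0)
    (heven : Even (Multiset.card X))
    (hLR : X = L + R)
    (hL : ∀ x ∈ L, x ≤ η) (hR : ∀ x ∈ R, η ≤ x)
    (hcard : Multiset.card L = Multiset.card R) :
    ∃ S : Multiset ℝ,
      (S ≤ L ∨ S ≤ R) ∧
      (∀ s ∈ S, (s - η) ^ 2 ≥ (1 / 9) * (s - X.sum / (Multiset.card X : ℝ)) ^ 2) ∧
      (S.map (fun s => (s - X.sum / (Multiset.card X : ℝ)) ^ 2)).sum ≥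
        (1 / 32) * (X.map (fun x => (x - X.sum / (Multiset.card X : ℝ)) ^ 2)).sum := by
  classical
  subst hLR
  set μ : ℝ := (L + R).sum / (Multiset.card (L + R) : ℝ) with hμdef
  have hc0 : Multiset.card (L + R) ≠ 0 := fun h => hX (Multiset.card_eq_zero.mp h)
  have hcR : (Multiset.card (L + R) : ℝ) ≠ 0 := Nat.cast_ne_zero.mpr hc0
  have hsum : (L + R).sum = (Multiset.card (L + R) : ℝ) * μ := by
    rw [hμdef, ← mul_div_assoc, mul_comm, mul_div_assoc, div_self hcR, mul_one]
  rcases le_or_gt μ η with hle | hlt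
  · exact key L R η μ hX hL hR hcard hsum hle
  · have hX' : R.map (fun x : ℝ => -x) + L.map (fun x : ℝ => -x) ≠ 0 := by
      intro h
      have hcc := congrArg Multiset.card h
      simp only [Multiset.card_add, Multiset.card_map, Multiset.card_zero] at hcc
      apply hX
      rw [← Multiset.card_eq_zero, Multiset.card_add]
      omega
    have hL' : ∀ x ∈ R.map (fun x : ℝ => -x), x ≤ -η := by
      intro x hx
      rw [Multiset.mem_map] at hx
      obtain ⟨y, hy, rfl⟩ := hx
      have := hR y hy; linarith
    have hR' : ∀ x ∈ L.map (fun x : ℝ => -x), -η ≤ x := by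
      intro x hx
      rw [Multiset.mem_map] at hx
      obtain ⟨y, hy, rfl⟩ := hx
      have := hL y hy; linarith
    have hcard' : Multiset.card (R.map (fun x : ℝ => -x)) =
        Multiset.card (L.map (fun x : ℝ => -x)) := by
      simp [Multiset.card_map, hcard]
    have hsum' : (R.map (fun x : ℝ => -x) + L.map (fun x : ℝ => -x)).sum =
        (Multiset.card (R.map (fun x : ℝ => -x) + L.map (fun x : ℝ => -x)) : ℝ) * (-μ) := by
      rw [Multiset.sum_add, sum_map_neg'' R, sum_map_neg'' L]
      have hcc : (Multiset.card (R.map (fun x : ℝ => -x) + L.map (fun x : ℝ => -x)) : ℝ) =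
          (Multiset.card (L + R) : ℝ) := by
        simp only [Multiset.card_add, Multiset.card_map]
        push_cast; ring
      rw [hcc]
      rw [Multiset.sum_add] at hsum
      linarith [hsum]
    obtain ⟨S', hS1, hS2, hS3⟩ := key (R.map (fun x : ℝ => -x)) (L.map (fun x : ℝ => -x))
      (-η) (-μ) hX' hL' hR' hcard' hsum' (by linarith)
    refine ⟨S'.map (fun x : ℝ => -x), ?_, ?_, ?_⟩
    · rcases hS1 with h | h
      · right
        have := Multiset.map_le_map (f := fun x : ℝ => -x) h
        simpa [Multiset.map_map, Function.comp, neg_neg, Multiset.map_id'] using this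
      · left
        have := Multiset.map_le_map (f := fun x : ℝ => -x) h
        simpa [Multiset.map_map, Function.comp, neg_neg, Multiset.map_id'] using this
    · intro s hs
      rw [Multiset.mem_map] at hs
      obtain ⟨t, ht, rfl⟩ := hs
      have := hS2 t ht
      nlinarith [this]
    · have e1 : ((S'.map (fun x : ℝ => -x)).map (fun s => (s - μ) ^ 2)).sum =
          (S'.map (fun s => (s - -μ) ^ 2)).sum := by
        rw [Multiset.map_map]
        congr 1
        apply Multiset.map_congr rfl
        intro x _
        simp only [Function.comp_apply]
        ring
      have e2 : ((R.map (fun x : ℝ => -x) + L.map (fun x : ℝ => -x)).map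
            (fun x => (x - -μ) ^ 2)).sum =
          ((L + R).map (fun x => (x - μ) ^ 2)).sum := by
        simp only [Multiset.map_add, Multiset.map_map, Multiset.sum_add]
        rw [Multiset.map_congr rfl (fun x _ => by simp only [Function.comp_apply]; ring :
              ∀ x ∈ R, ((fun x => (x - -μ) ^ 2) ∘ fun x : ℝ => -x) x = (x - μ) ^ 2),
            Multiset.map_congr rfl (fun x _ => by simp only [Function.comp_apply]; ring :
              ∀ x ∈ L, ((fun x => (x - -μ) ^ 2) ∘ fun x : ℝ => -x) x = (x - μ) ^ 2)]
        ring
      rw [← e1, e2] at hS3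
      exact hS3
end

section
/- Let X be a finite multiset of reals with |X| even, let μ̄ be its average, let L_{μ̄} = {x ∈ X : x < μ̄}, and d = ∑_{x ∈ L_{μ̄}} (μ̄ − x). Suppose η ∈ ℝ satisfies: the set L_η = {x ∈ X : x ≤ η} has exactly |X|/2 elements and η ≤ μ̄. Then η ≥ μ̄ − 2d/|X|. -/
/-- The separator η of a bisection of a finite multiset X of even cardinality
is at least μ̄ − 2d/|X|, where μ̄ is the mean and d is the total deviation below the mean. -/
theorem stmt1 (X : Multiset ℝ) (η : ℝ) (hX : X ≠ 0)
    (heven : Even (Multiset.card X))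
    (hcard : Multiset.card (X.filter (fun x => x ≤ η)) = Multiset.card X / 2)
    (hη : η ≤ X.sum / (Multiset.card X : ℝ)) :
    η ≥ X.sum / (Multiset.card X : ℝ) -
      2 * ((X.filter (fun x => x < X.sum / (Multiset.card X : ℝ))).map
            (fun x => X.sum / (Multiset.card X : ℝ) - x)).sum / (Multiset.card X : ℝ) := by
  set μ := X.sum / (Multiset.card X : ℝ) with hμ
  set n := Multiset.card X with hn
  set L := X.filter (fun x => x ≤ η) with hL
  set d := ((X.filter (fun x => x < μ)).map (fun x => μ - x)).sum with hd
  obtain ⟨k, hk⟩ := heven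
  have hn0 : 0 < n := Multiset.card_pos.mpr hX
  have hk0 : 0 < k := by omega
  have hcardL : Multiset.card L = k := by rw [hcard]; omega
  -- lower bound : k • (μ - η) ≤ sum over L of (μ - x)
  have hlow : (k : ℝ) * (μ - η) ≤ (L.map (fun x => μ - x)).sum := by
    have := Multiset.card_nsmul_le_sum (s := L.map (fun x => μ - x)) (a := μ - η) ?_
    · simpa [hcardL, nsmul_eq_mul] using this
    · intro y hy
      obtain ⟨x, hx, rfl⟩ := Multiset.mem_map.mp hy
      have hxη : x ≤ η := (Multiset.mem_filter.mp hx).2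
      linarith
  -- upper bound : sum over L of (μ - x) ≤ d
  have g : ℝ → ℝ := fun x => max (μ - x) 0
  have hup : (L.map (fun x => μ - x)).sum ≤ d := by
    have h1 : (L.map (fun x => μ - x)).sum ≤ (L.map (fun x => max (μ - x) 0)).sum := by
      apply Multiset.sum_map_le_sum_map
      intro x _
      exact le_max_left _ _
    have h2 : (L.map (fun x => max (μ - x) 0)).sum ≤ (X.map (fun x => max (μ - x) 0)).sum := by
      have hle : L.map (fun x => max (μ - x) 0) ≤ X.map (fun x => max (μ - x) 0) :=
        Multiset.map_le_map (Multiset.filter_le _ _)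
      obtain ⟨u, hu⟩ := Multiset.le_iff_exists_add.mp hle
      rw [hu, Multiset.sum_add]
      have : (0:ℝ) ≤ u.sum := by
        apply Multiset.sum_nonneg
        intro a ha
        have : a ∈ X.map (fun x => max (μ - x) 0) := by
          rw [hu]; exact Multiset.mem_add.mpr (Or.inr ha)
        obtain ⟨x, _, rfl⟩ := Multiset.mem_map.mp this
        exact le_max_right _ _
      linarith
    have h3 : (X.map (fun x => max (μ - x) 0)).sum = d := by
      conv_lhs => rw [← Multiset.filter_add_not (fun x => x < μ) X]
      rw [Multiset.map_add, Multiset.sum_add, hd]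
      have e1 : (X.filter (fun x => x < μ)).map (fun x => max (μ - x) 0)
          = (X.filter (fun x => x < μ)).map (fun x => μ - x) := by
        apply Multiset.map_congr rfl
        intro x hx
        have : x < μ := (Multiset.mem_filter.mp hx).2
        simp [max_eq_left, sub_nonneg, this.le]
      have e2 : ((X.filter (fun x => ¬ x < μ)).map (fun x => max (μ - x) 0)).sum = 0 := by
        apply Multiset.sum_eq_zero
        intro a ha
        obtain ⟨x, hx, rfl⟩ := Multiset.mem_map.mp ha
        have : ¬ x < μ := (Multiset.mem_filter.mp hx).2
        simp [max_eq_right, sub_nonpos, not_lt.mp this]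
      rw [e1, e2, add_zero]
    calc _ ≤ _ := h1
      _ ≤ _ := h2
      _ = d := h3
  have key : (k : ℝ) * (μ - η) ≤ d := le_trans hlow hup
  have hk0' : (0:ℝ) < k := by exact_mod_cast hk0
  have hn2 : (n : ℝ) = 2 * k := by exact_mod_cast (by omega : n = 2 * k)
  have h2d : 2 * d / (n : ℝ) = d / k := by rw [hn2]; field_simp
  rw [ge_iff_le, h2d, sub_le_iff_le_add, ← sub_le_iff_le_add', le_div_iff₀ hk0']
  linarith [key]
end

section
/- Let p, n : ℕ → ℝ_{≥0} be sequences (positive and negative flow units at a vertex over time) and let ∇ > 0. Suppose: (i) t ↦ min(p(t), n(t)) is nondecreasing, (ii) t ↦ min(p(t) + ∇, n(t)) is nondecreasing. Suppose there are times t₁ ≤ t₂ ≤ t₃ with n(t₁) ≤ p(t₁), p(t₂) + ∇ ≤ n(t₂), and n(t₃) ≤ p(t₃). Then n(t₃) ≥ n(t₁) + ∇. -/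
/-- Flip argument for Push-Pull-Relabel: between a state with no negative excess,
a state with negative excess, and again a state with no negative excess, the total
negative units must increase by at least the sink capacity ∇. -/
theorem stmt12 (pos neg : ℕ → ℝ) (hpos : ∀ t, 0 ≤ pos t) (hneg : ∀ t, 0 ≤ neg t)
    (nabla : ℝ) (hnabla : 0 < nabla)
    (hmin1 : Monotone (fun t => min (pos t) (neg t)))
    (hmin2 : Monotone (fun t => min (pos t + nabla) (neg t)))
    (t₁ t₂ t₃ : ℕ) (h12 : t₁ ≤ t₂) (h23 : t₂ ≤ t₃)
    (h1 : neg t₁ ≤ pos t₁) (h2 : pos t₂ + nabla ≤ neg t₂)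
    (h3 : neg t₃ ≤ pos t₃) :
    neg t₃ ≥ neg t₁ + nabla := by
  have ha := hmin1 h12
  have hb := hmin2 h23
  simp only [min_eq_right h1, min_eq_left h2] at ha hb
  have : neg t₁ ≤ pos t₂ := le_trans ha (min_le_left _ _)
  have : pos t₂ + nabla ≤ neg t₃ := le_trans hb (min_le_right _ _)
  linarith
end

section
/- Under the hypotheses of the previous abstraction, if there exist times t₁ ≤ t₂ ≤ ... ≤ t_{2λ−1} alternating between states n(t) ≤ p(t) (odd indices) and p(t) + ∇ ≤ n(t) (even indices), with t ↦ min(p(t),n(t)) and t ↦ min(p(t)+∇, n(t)) nondecreasing, then min(p(t_{2λ−1}), n(t_{2λ−1})) ≥ (λ−1)·∇. -/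
/-- Flip-number bound: after 2λ−1 alternations between the states n ≤ p and
p + ∇ ≤ n (along nondecreasing times), min(p, n) at the final time is at least
(λ−1)·∇. -/
theorem stmt13 (pos neg : ℕ → ℝ) (hpos : ∀ t, 0 ≤ pos t) (hneg : ∀ t, 0 ≤ neg t)
    (nabla : ℝ) (hnabla : 0 < nabla)
    (hmin1 : Monotone (fun t => min (pos t) (neg t)))
    (hmin2 : Monotone (fun t => min (pos t + nabla) (neg t)))
    (lam : ℕ) (hlam : 1 ≤ lam) (t : ℕ → ℕ) (hmono : Monotone t)
    (halt : ∀ i < 2 * lam - 1,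
      (Even i → neg (t i) ≤ pos (t i)) ∧ (¬ Even i → pos (t i) + nabla ≤ neg (t i))) :
    min (pos (t (2 * lam - 2))) (neg (t (2 * lam - 2))) ≥ ((lam : ℝ) - 1) * nabla := by
  have key : ∀ k, k < lam → (k : ℝ) * nabla ≤ min (pos (t (2 * k))) (neg (t (2 * k))) := by
    intro k
    induction k with
    | zero =>
      intro _
      simp only [Nat.cast_zero, zero_mul, le_min_iff]
      exact ⟨hpos _, hneg _⟩
    | succ k ih =>
      intro hk
      have hk' : k < lam := Nat.lt_of_succ_lt hk
      have h1 := ih hk'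
      have h2k1 : 2 * k + 1 < 2 * lam - 1 := by omega
      have h2k2 : 2 * k + 2 < 2 * lam - 1 := by omega
      have hodd : pos (t (2 * k + 1)) + nabla ≤ neg (t (2 * k + 1)) :=
        (halt _ h2k1).2 (by rw [Nat.even_iff]; omega)
      have heven : neg (t (2 * k + 2)) ≤ pos (t (2 * k + 2)) :=
        (halt _ h2k2).1 ⟨k + 1, by ring⟩
      have e1 : min (pos (t (2 * k + 2))) (neg (t (2 * k + 2))) = neg (t (2 * k + 2)) :=
        min_eq_right heven
      have e2 : min (pos (t (2 * k + 2)) + nabla) (neg (t (2 * k + 2))) = neg (t (2 * k + 2)) :=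
        min_eq_right (heven.trans (le_add_of_nonneg_right hnabla.le))
      have e3 : min (pos (t (2 * k + 1)) + nabla) (neg (t (2 * k + 1))) =
          pos (t (2 * k + 1)) + nabla := min_eq_left hodd
      have e4 : min (pos (t (2 * k + 1))) (neg (t (2 * k + 1))) = pos (t (2 * k + 1)) :=
        min_eq_left ((le_add_of_nonneg_right hnabla.le).trans hodd)
      have hmm1 : min (pos (t (2 * k))) (neg (t (2 * k))) ≤
          min (pos (t (2 * k + 1))) (neg (t (2 * k + 1))) :=
        hmin1 (hmono (by omega))
      have hmm2 : min (pos (t (2 * k + 1)) + nabla) (neg (t (2 * k + 1))) ≤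
          min (pos (t (2 * k + 2)) + nabla) (neg (t (2 * k + 2))) :=
        hmin2 (hmono (by omega))
      have heq : 2 * (k + 1) = 2 * k + 2 := by ring
      rw [heq]
      push_cast
      calc ((k : ℝ) + 1) * nabla = (k : ℝ) * nabla + nabla := by ring
        _ ≤ min (pos (t (2 * k))) (neg (t (2 * k))) + nabla := by linarith
        _ ≤ pos (t (2 * k + 1)) + nabla := by rw [← e4]; linarith
        _ ≤ neg (t (2 * k + 2)) := by rw [← e2, ← e3]; exact hmm2
        _ = min (pos (t (2 * k + 2))) (neg (t (2 * k + 2))) := e1.symm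
  have h := key (lam - 1) (by omega)
  have h2 : 2 * (lam - 1) = 2 * lam - 2 := by omega
  rw [h2] at h
  have hc : ((lam - 1 : ℕ) : ℝ) = (lam : ℝ) - 1 := by
    push_cast [Nat.cast_sub hlam]; ring
  rw [hc] at h
  exact h
end
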